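/- Let λ, μ be real numbers and h > 0 with λh < 12/5, and set x = λh, a = (12 + 8x)/(12 − 5x), b = 12μ√h/(12 − 5x), c = −x/(12 − 5x). Then the conditions [0 ≤ c < 1, |a| < 1 − c, b²(1−c) < (1+c)((1−c)² − a²)] hold if and only if −6 < λh < 0 and μ² < λ(λh − 2)(λh + 6)/(2(3 − λh)). -/

import Mathlib

/-- The real-coefficient mean-square stability conditions of AM2 characterize the
stability region `R_AM2(h)`. -/
theorem stmt_16 (lam mu h : ℝ) (hh : 0 < h) (hx : lam * h < 12 / 5)
    (x a b c : ℝ) (hxdef : x = lam * h)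
    (ha : a = (12 + 8 * x) / (12 - 5 * x))
    (hb : b = 12 * mu * Real.sqrt h / (12 - 5 * x))
    (hc : c = -x / (12 - 5 * x)) :
    (0 ≤ c ∧ c < 1 ∧ |a| < 1 - c ∧ b ^ 2 * (1 - c) < (1 + c) * ((1 - c) ^ 2 - a ^ 2)) ↔
      (-6 < lam * h ∧ lam * h < 0 ∧
        mu ^ 2 < lam * (lam * h - 2) * (lam * h + 6) / (2 * (3 - lam * h))) := by
  subst hxdef ha hb hc
  set x := lam * h with hxd
  have hd : (0:ℝ) < 12 - 5 * x := by linarith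
  have hd' : (12:ℝ) - 5 * x ≠ 0 := ne_of_gt hd
  have hs : Real.sqrt h ^ 2 = h := Real.sq_sqrt hh.le
  have h1c : 1 - (-x / (12 - 5 * x)) = (12 - 4 * x) / (12 - 5 * x) := by
    linear_combination (-1 : ℝ) * mul_inv_cancel₀ hd'
  have habs : |(12 + 8 * x) / (12 - 5 * x)| = |12 + 8 * x| / (12 - 5 * x) := by
    rw [abs_div, abs_of_pos hd]
  -- the quadratic condition rewritten as a polynomial inequality
  have e1 : (12 * mu * Real.sqrt h / (12 - 5 * x)) ^ 2 * (1 - (-x / (12 - 5 * x)))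
      = 144 * mu ^ 2 * h * (12 - 4 * x) / (12 - 5 * x) ^ 3 := by
    rw [div_pow, mul_pow, mul_pow, hs]
    field_simp; ring
  have e2 : (1 + -x / (12 - 5 * x)) *
      ((1 - (-x / (12 - 5 * x))) ^ 2 - ((12 + 8 * x) / (12 - 5 * x)) ^ 2)
      = (12 - 6 * x) * (-48 * x * (6 + x)) / (12 - 5 * x) ^ 3 := by
    have key : ∀ y : ℝ, (12:ℝ) - 5 * y ≠ 0 → (1 + -y / (12 - 5 * y)) *
        ((1 - (-y / (12 - 5 * y))) ^ 2 - ((12 + 8 * y) / (12 - 5 * y)) ^ 2)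
        = (12 - 6 * y) * (-48 * y * (6 + y)) / (12 - 5 * y) ^ 3 := by
      intro y hy
      generalize hD : (12:ℝ) - 5 * y = D at *
      have hy' : y = (12 - D) / 5 := by linarith
      subst hy'
      field_simp
      ring
    exact key x hd'
  have h3x : (0:ℝ) < 2 * (3 - x) := by linarith
  have hkey : (144 * mu ^ 2 * h * (12 - 4 * x) < (12 - 6 * x) * (-48 * x * (6 + x))) ↔
      mu ^ 2 < lam * (x - 2) * (x + 6) / (2 * (3 - x)) := by
    rw [lt_div_iff₀ h3x]
    constructor <;> intro hq <;> nlinarith [hh, hq, sq_nonneg x]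
  constructor
  · rintro ⟨h1, h2, h3, h4⟩
    rw [h1c, habs, div_lt_div_iff_of_pos_right hd, abs_lt] at h3
    refine ⟨by linarith [h3.1], by linarith [h3.2], ?_⟩
    rw [e1, e2, div_lt_div_iff_of_pos_right (by positivity : (0:ℝ) < (12 - 5*x)^3)] at h4
    have := hkey.mp h4
    convert this using 2 <;> ring
  · rintro ⟨hm6, h0, hmu⟩
    have hc0 : (0:ℝ) ≤ -x / (12 - 5 * x) := div_nonneg (by linarith) hd.le
    have hc1 : -x / (12 - 5 * x) < 1 := (div_lt_one hd).mpr (by linarith)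
    refine ⟨hc0, hc1, ?_, ?_⟩
    · rw [h1c, habs, div_lt_div_iff_of_pos_right hd, abs_lt]
      constructor <;> linarith
    · rw [e1, e2, div_lt_div_iff_of_pos_right (by positivity : (0:ℝ) < (12 - 5*x)^3)]
      apply hkey.mpr
      convert hmu using 2 <;> ring
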